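/- arXiv:2007.03959 — 3 statements merged into one kernel-verified Lean document; each statement's English description precedes it below -/
import Mathlib

section
/- Let G be a finite graph and τ a threshold function satisfying τ(u) ∈ {0, 1, deg_G(u)} for every vertex u. Let U be the vertex set of a connected component of order at least 2 of the induced subgraph G[{u : τ(u) = deg_G(u)}], let G' = G − N_G[U], and define τ'(u) = max{0, τ(u) − |N_G(u) ∩ N_G[U]|} for u ∈ V(G'). Then τ'(u) ∈ {0, 1, deg_{G'}(u)} for every vertex u of G'. -/
open Finset

/-- The non-monotone activation process on `(G, τ)` starting with `X`:
`X_t = {u : |N_G(u) ∩ X_{t-1}| ≥ τ(u)}` for `t ≥ 1`. -/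
def activation {V : Type*} (G : SimpleGraph V) [Fintype V] [DecidableEq V]
    [DecidableRel G.Adj] (τ : V → ℤ) (X : Finset V) : ℕ → Finset V
  | 0 => X
  | t + 1 => Finset.univ.filter
      (fun u => τ u ≤ ((G.neighborFinset u ∩ activation G τ X t).card : ℤ))

/-- `X` is a non-monotone target set for `(G, τ)`. -/
def IsTargetSet {V : Type*} (G : SimpleGraph V) [Fintype V] [DecidableEq V]
    [DecidableRel G.Adj] (τ : V → ℤ) (X : Finset V) : Prop :=
  ∃ t₀ : ℕ, ∀ t ≥ t₀, activation G τ X t = Finset.univ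

/-- Open neighbourhood of a set of vertices: `N_G(S)`. -/
def openNbhd {V : Type*} (G : SimpleGraph V) (S : Set V) : Set V :=
  {v | v ∉ S ∧ ∃ u ∈ S, G.Adj u v}

/-- Closed neighbourhood of a set of vertices: `N_G[S]`. -/
def closedNbhd {V : Type*} (G : SimpleGraph V) (S : Set V) : Set V :=
  S ∪ openNbhd G S

/-- Closed neighbourhood, as a finset. -/
def closedNbhdFinset {V : Type*} (G : SimpleGraph V) [Fintype V] [DecidableEq V]
    [DecidableRel G.Adj] (U : Finset V) : Finset V :=
  U ∪ Finset.univ.filter (fun v => ∃ u ∈ U, G.Adj u v)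

/-- `U` is the vertex set of a connected component of the subgraph of `G` induced by `S`. -/
def IsComponentOf {V : Type*} (G : SimpleGraph V) (S U : Set V) : Prop :=
  U ⊆ S ∧ U.Nonempty ∧ (G.induce U).Connected ∧
    ∀ u ∈ U, ∀ v ∈ S, G.Adj u v → v ∈ U

/-- The subgraph of `G` induced by `S`, as a graph on the subtype `S`. -/
def restrict {V : Type*} (G : SimpleGraph V) (S : Set V) : SimpleGraph S where
  Adj a b := G.Adj a b
  symm := ⟨fun _ _ h => G.adj_symm h⟩
  loopless := ⟨fun a h => G.irrefl h⟩

instance {V : Type*} (G : SimpleGraph V) (S : Set V) [h : DecidableRel G.Adj] :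
    DecidableRel (restrict G S).Adj := fun a b => h a b


lemma deg_restrict {V : Type*} [Fintype V] [DecidableEq V] (G : SimpleGraph V)
    [DecidableRel G.Adj] (T : Finset V) (u : V) (hu : u ∉ T) :
    (restrict G {v | v ∉ T}).degree ⟨u, hu⟩ = (G.neighborFinset u \ T).card := by
  rw [SimpleGraph.degree]
  refine Finset.card_bij (fun b _ => (b : V)) ?_ ?_ ?_
  · intro b hb
    simp only [SimpleGraph.mem_neighborFinset] at hb
    simp only [Finset.mem_sdiff, SimpleGraph.mem_neighborFinset]
    exact ⟨hb, b.2⟩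
  · intro a ha b hb h
    exact Subtype.ext h
  · intro b hb
    simp only [Finset.mem_sdiff, SimpleGraph.mem_neighborFinset] at hb
    exact ⟨⟨b, hb.2⟩, by rw [SimpleGraph.mem_neighborFinset]; exact hb.1, rfl⟩

theorem stmt_6 {V : Type*} [Fintype V] [DecidableEq V] (G : SimpleGraph V)
    [DecidableRel G.Adj] (τ : V → ℤ)
    (hτ : ∀ u, τ u = 0 ∨ τ u = 1 ∨ τ u = (G.degree u : ℤ))
    (U : Finset V)
    (hU : IsComponentOf G {u | τ u = (G.degree u : ℤ)} ↑U)
    (hcard : 2 ≤ U.card) :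
    ∀ (u : V) (hu : u ∉ closedNbhdFinset G U),
      max 0 (τ u - ((G.neighborFinset u ∩ closedNbhdFinset G U).card : ℤ)) = 0 ∨
      max 0 (τ u - ((G.neighborFinset u ∩ closedNbhdFinset G U).card : ℤ)) = 1 ∨
      max 0 (τ u - ((G.neighborFinset u ∩ closedNbhdFinset G U).card : ℤ)) =
        ((restrict G {v | v ∉ closedNbhdFinset G U}).degree ⟨u, hu⟩ : ℤ) := by
  intro u hu
  set c := (G.neighborFinset u ∩ closedNbhdFinset G U).card with hc
  have hdeg : (restrict G {v | v ∉ closedNbhdFinset G U}).degree ⟨u, hu⟩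
      = (G.neighborFinset u \ closedNbhdFinset G U).card := deg_restrict G _ u hu
  have hsum : c + (G.neighborFinset u \ closedNbhdFinset G U).card = G.degree u := by
    rw [hc, SimpleGraph.degree]
    exact Finset.card_inter_add_card_sdiff _ _
  rcases hτ u with h | h | h
  · left; rw [h]; omega
  · rw [h]
    by_cases hc0 : c = 0
    · right; left; rw [hc0]; simp
    · left; omega
  · right; right
    rw [h, hdeg]
    omega
end

section
/- Let G be a finite graph and τ a threshold function with τ(u) ∈ {0,1,deg_G(u)} for all u, such that no edge of G joins two vertices u,v with τ(u)=deg_G(u) and τ(v)=deg_G(v). Let U be the vertex set of a component of order ≥ 2 of G[{u : τ(u) ∈ {0,1}}] with τ(u)=1 for all u ∈ U. If X is a non-monotone target set for (G,τ), then X ∩ N_G[U] ≠ ∅. -/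
open Finset

theorem stmt_8 {V : Type*} [Fintype V] [DecidableEq V] (G : SimpleGraph V)
    [DecidableRel G.Adj] (τ : V → ℤ)
    (hτ : ∀ u, τ u = 0 ∨ τ u = 1 ∨ τ u = (G.degree u : ℤ))
    (hedge : ∀ u v, G.Adj u v →
      ¬ (τ u = (G.degree u : ℤ) ∧ τ v = (G.degree v : ℤ)))
    (U : Finset V)
    (hU : IsComponentOf G {u | τ u = 0 ∨ τ u = 1} ↑U)
    (hcard : 2 ≤ U.card)
    (hone : ∀ u ∈ U, τ u = 1)
    (X : Finset V) (hX : IsTargetSet G τ X) :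
    (X ∩ closedNbhdFinset G U).Nonempty := by
  by_contra hcon
  rw [Finset.not_nonempty_iff_eq_empty] at hcon
  -- membership in closedNbhdFinset
  have hmem : ∀ v, v ∈ closedNbhdFinset G U ↔ (v ∈ U ∨ ∃ u ∈ U, G.Adj u v) := by
    intro v
    simp [closedNbhdFinset]
  -- key induction: the closed neighbourhood is never touched
  have key : ∀ t, ∀ v ∈ closedNbhdFinset G U, v ∉ activation G τ X t := by
    intro t
    induction t with
    | zero =>
      intro v hv hvX
      have : v ∈ X ∩ closedNbhdFinset G U := Finset.mem_inter.2 ⟨hvX, hv⟩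
      simp [hcon] at this
    | succ t ih =>
      intro v hv hvA
      simp only [activation, Finset.mem_filter] at hvA
      by_cases hvU : v ∈ U
      · -- v ∈ U : τ v = 1, all neighbours are in closedNbhd, so none active
        have hτv := hone v hvU
        have hempty : G.neighborFinset v ∩ activation G τ X t = ∅ := by
          rw [Finset.eq_empty_iff_forall_notMem]
          intro w hw
          rw [Finset.mem_inter, SimpleGraph.mem_neighborFinset] at hw
          refine ih w ?_ hw.2
          exact (hmem w).2 (Or.inr ⟨v, hvU, hw.1⟩)
        rw [hempty, hτv] at hvA
        simp at hvA
      · -- v ∈ N(U) \ U : τ v = deg v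
        obtain ⟨u, huU, hadj⟩ := ((hmem v).1 hv).resolve_left hvU
        have hτv : τ v = (G.degree v : ℤ) := by
          rcases hτ v with h0 | h1 | hd
          · exact absurd (hU.2.2.2 u huU v (Or.inl h0) hadj) hvU
          · exact absurd (hU.2.2.2 u huU v (Or.inr h1) hadj) hvU
          · exact hd
        -- all neighbours of v must be active, in particular u
        have hfull : G.neighborFinset v ∩ activation G τ X t = G.neighborFinset v := by
          apply Finset.eq_of_subset_of_card_le (Finset.inter_subset_left)
          rw [hτv] at hvA
          have := hvA.2
          rw [← G.card_neighborFinset_eq_degree v] at this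
          exact_mod_cast this
        have huA : u ∈ activation G τ X t := by
          have : u ∈ G.neighborFinset v ∩ activation G τ X t := by
            rw [hfull, SimpleGraph.mem_neighborFinset]
            exact hadj.symm
          exact (Finset.mem_inter.1 this).2
        exact ih u ((hmem u).2 (Or.inl huU)) huA
  obtain ⟨t₀, ht₀⟩ := hX
  obtain ⟨u, huU⟩ := Finset.card_pos.1 (by omega : 0 < U.card)
  have hu : u ∈ closedNbhdFinset G U := (hmem u).2 (Or.inl huU)
  have := key t₀ u hu
  rw [ht₀ t₀ le_rfl] at this
  exact this (Finset.mem_univ u)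
end

section
/- Let G be a finite graph, τ a threshold function, and u a vertex with τ(u)=1 such that every neighbour v of u satisfies τ(v)=deg_G(v). Suppose u has neighbours v₁ and v₂ such that, in the activation process starting at X₀, we have {v₁} ∪ N_G(v₂) ⊆ X_t for some t. Then {v₂} ∪ N_G(v₁) ⊆ X_{t+1} and {v₁} ∪ N_G(v₂) ⊆ X_{t+2}; consequently u ∈ X_s for every s ≥ t+1. -/
open Finset

lemma step_lemma {V : Type*} [Fintype V] [DecidableEq V] (G : SimpleGraph V)
    [DecidableRel G.Adj] (τ : V → ℤ) (X₀ : Finset V) (a b : V) (s : ℕ)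
    (hτb : τ b = (G.degree b : ℤ))
    (hA : ∀ w, G.Adj a w → τ w = 0 ∨ τ w = 1)
    (h : insert a (G.neighborFinset b) ⊆ activation G τ X₀ s) :
    insert b (G.neighborFinset a) ⊆ activation G τ X₀ (s + 1) := by
  intro w hw
  simp only [activation, Finset.mem_filter, Finset.mem_univ, true_and]
  rcases Finset.mem_insert.mp hw with rfl | hw
  · have hsub : G.neighborFinset w ⊆ activation G τ X₀ s := by
      intro x hx; exact h (Finset.mem_insert_of_mem hx)
    rw [Finset.inter_eq_left.mpr hsub]
    rw [hτb, SimpleGraph.card_neighborFinset_eq_degree]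
  · have haw : G.Adj a w := (SimpleGraph.mem_neighborFinset G a w).mp hw
    have hmem : a ∈ G.neighborFinset w ∩ activation G τ X₀ s :=
      Finset.mem_inter.mpr ⟨(SimpleGraph.mem_neighborFinset G w a).mpr haw.symm,
        h (Finset.mem_insert_self a _)⟩
    have hcard : 1 ≤ (G.neighborFinset w ∩ activation G τ X₀ s).card :=
      Finset.card_pos.mpr ⟨a, hmem⟩
    rcases hA w haw with h0 | h1 <;> rw [‹τ w = _›] <;> exact_mod_cast Nat.le_trans (by omega) hcard

theorem stmt_11 {V : Type*} [Fintype V] [DecidableEq V] (G : SimpleGraph V)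
    [DecidableRel G.Adj] (τ : V → ℤ) (X₀ : Finset V) (u v₁ v₂ : V) (t : ℕ)
    (hu : τ u = 1)
    (hnb : ∀ v, G.Adj u v → τ v = (G.degree v : ℤ))
    (hctx : ∀ w, (G.Adj v₁ w ∨ G.Adj v₂ w) → τ w = 0 ∨ τ w = 1)
    (h1 : G.Adj u v₁) (h2 : G.Adj u v₂)
    (ht : insert v₁ (G.neighborFinset v₂) ⊆ activation G τ X₀ t) :
    insert v₂ (G.neighborFinset v₁) ⊆ activation G τ X₀ (t + 1) ∧
    insert v₁ (G.neighborFinset v₂) ⊆ activation G τ X₀ (t + 2) ∧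
    ∀ s ≥ t + 1, u ∈ activation G τ X₀ s := by
  have key : ∀ k, insert v₁ (G.neighborFinset v₂) ⊆ activation G τ X₀ (t + 2*k) ∧
      insert v₂ (G.neighborFinset v₁) ⊆ activation G τ X₀ (t + 2*k + 1) := by
    intro k
    induction k with
    | zero =>
      refine ⟨by simpa using ht, ?_⟩
      have := step_lemma G τ X₀ v₁ v₂ t (hnb v₂ h2) (fun w h => hctx w (Or.inl h))
        (by simpa using ht)
      simpa using this
    | succ n ih =>
      have h1' : insert v₁ (G.neighborFinset v₂) ⊆ activation G τ X₀ (t + 2*(n+1)) := by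
        have := step_lemma G τ X₀ v₂ v₁ (t + 2*n + 1) (hnb v₁ h1)
          (fun w h => hctx w (Or.inr h)) ih.2
        have e : t + 2*n + 1 + 1 = t + 2*(n+1) := by ring
        rwa [e] at this
      refine ⟨h1', ?_⟩
      have := step_lemma G τ X₀ v₁ v₂ (t + 2*(n+1)) (hnb v₂ h2)
        (fun w h => hctx w (Or.inl h)) h1'
      convert this using 2
  have hither : ∀ s, t ≤ s → v₁ ∈ activation G τ X₀ s ∨ v₂ ∈ activation G τ X₀ s := by
    intro s hs
    obtain ⟨d, rfl⟩ := Nat.exists_eq_add_of_le hs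
    rcases Nat.even_or_odd d with ⟨k, hk⟩ | ⟨k, hk⟩
    · left
      have := (key k).1 (Finset.mem_insert_self v₁ _)
      rwa [show t + d = t + 2*k by omega]
    · right
      have := (key k).2 (Finset.mem_insert_self v₂ _)
      rwa [show t + d = t + 2*k + 1 by omega]
  have hu_mem : ∀ s ≥ t + 1, u ∈ activation G τ X₀ s := by
    intro s hs
    obtain ⟨d, rfl⟩ : ∃ d, s = (t + d) + 1 := ⟨s - t - 1, by omega⟩
    show u ∈ activation G τ X₀ (t + d + 1)
    simp only [activation, Finset.mem_filter, Finset.mem_univ, true_and]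
    rw [hu]
    have hx : ∃ x, x ∈ G.neighborFinset u ∩ activation G τ X₀ (t + d) := by
      rcases hither (t + d) (by omega) with h | h
      · exact ⟨v₁, Finset.mem_inter.mpr ⟨(SimpleGraph.mem_neighborFinset G u v₁).mpr h1, h⟩⟩
      · exact ⟨v₂, Finset.mem_inter.mpr ⟨(SimpleGraph.mem_neighborFinset G u v₂).mpr h2, h⟩⟩
    have := Finset.card_pos.mpr hx
    exact_mod_cast this
  refine ⟨?_, ?_, hu_mem⟩
  · have := (key 0).2; simpa using this
  · have := (key 1).1
    rwa [show t + 2*1 = t + 2 by ring] at this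
end
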